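/- Let m ≥ 2, let b₁,…,b_{m−1} be real numbers, and let q(s) = s^{m−1} + b_{m−1}s^{m−2} + ⋯ + b₂s + b₁. Suppose every complex root of q has modulus strictly less than 1. Let f : ℕ → ℝ be a sequence with lim_{k→∞} f[k] = f*, and let r : ℕ → ℝ satisfy r[k+m−1] + b_{m−1}r[k+m−2] + ⋯ + b₂ r[k+1] + b₁ r[k] = f[k] for all k ∈ ℕ. Then lim_{k→∞} r[k] = f*/(1 + b₁ + ⋯ + b_{m−1}). -/

import Mathlib

open Filter

open Polynomial in
lemma decay_aux (lam : ℂ) (hlam : ‖lam‖ < 1) (d e : ℕ → ℂ)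
    (hd : Tendsto d atTop (nhds 0))
    (he : ∀ k, e (k + 1) = lam * e k + d k) :
    Tendsto e atTop (nhds 0) := by
  have ha0 : (0:ℝ) ≤ ‖lam‖ := norm_nonneg _
  rw [Metric.tendsto_atTop]
  intro ε hε
  have h1a : 0 < 1 - ‖lam‖ := by linarith
  have hδ : 0 < ε * (1 - ‖lam‖) / 2 := by positivity
  obtain ⟨N₁, hN₁⟩ := (Metric.tendsto_atTop.1 hd) (ε * (1 - ‖lam‖) / 2) hδ
  have bound : ∀ j, ‖e (N₁ + j)‖ ≤ ‖lam‖ ^ j * ‖e N₁‖ + ε / 2 := by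
    intro j
    induction j with
    | zero => simp; linarith
    | succ j ihj =>
      have hdb : ‖d (N₁ + j)‖ ≤ ε * (1 - ‖lam‖) / 2 := by
        have := hN₁ (N₁ + j) (Nat.le_add_right _ _)
        rw [dist_zero_right] at this
        exact le_of_lt this
      have h1 : ‖e (N₁ + (j + 1))‖ ≤ ‖lam‖ * ‖e (N₁ + j)‖ + ‖d (N₁ + j)‖ := by
        have : e (N₁ + (j + 1)) = lam * e (N₁ + j) + d (N₁ + j) := he (N₁ + j)
        rw [this]
        exact (norm_add_le _ _).trans (by rw [norm_mul])
      have h2 : ‖lam‖ * ‖e (N₁ + j)‖ ≤ ‖lam‖ * (‖lam‖ ^ j * ‖e N₁‖ + ε / 2) :=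
        mul_le_mul_of_nonneg_left ihj ha0
      have h3 : ‖lam‖ * (‖lam‖ ^ j * ‖e N₁‖ + ε / 2) + ε * (1 - ‖lam‖) / 2
          ≤ ‖lam‖ ^ (j + 1) * ‖e N₁‖ + ε / 2 := by
        ring_nf
        nlinarith [norm_nonneg (e N₁), pow_nonneg ha0 j]
      linarith
  have hgeo : Tendsto (fun j => ‖lam‖ ^ j * ‖e N₁‖) atTop (nhds 0) := by
    have := tendsto_pow_atTop_nhds_zero_of_lt_one ha0 hlam
    simpa using this.mul_const ‖e N₁‖
  obtain ⟨N₂, hN₂⟩ := (Metric.tendsto_atTop.1 hgeo) (ε / 2) (by positivity)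
  refine ⟨N₁ + N₂, fun k hk => ?_⟩
  obtain ⟨j, rfl⟩ := Nat.exists_eq_add_of_le (le_trans (Nat.le_add_right _ _) hk)
  have hj : N₂ ≤ j := by omega
  have h2 := hN₂ j hj
  rw [Real.dist_eq, sub_zero, abs_of_nonneg (by positivity)] at h2
  have := bound j
  rw [dist_zero_right]
  nlinarith

lemma first_order_aux (lam : ℂ) (hlam : ‖lam‖ < 1) (s : ℕ → ℂ) (M : ℂ)
    (hs : Tendsto s atTop (nhds M)) (r : ℕ → ℂ)
    (hr : ∀ k, r (k + 1) = lam * r k + s k) :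
    Tendsto r atTop (nhds (M / (1 - lam))) := by
  have hne : (1:ℂ) - lam ≠ 0 := by
    intro h
    have hl : lam = 1 := by linear_combination -h
    rw [hl] at hlam; simp at hlam
  set c := M / (1 - lam) with hc
  have hcM : c * (1 - lam) = M := div_mul_cancel₀ _ hne
  have he : ∀ k, r (k + 1) - c = lam * (r k - c) + (s k - M) := by
    intro k
    rw [hr]
    linear_combination -hcM
  have hd : Tendsto (fun k => s k - M) atTop (nhds 0) := by
    simpa using hs.sub_const M
  have h0 := decay_aux lam hlam (fun k => s k - M) (fun k => r k - c) hd he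
  have h1 := h0.add_const c
  simpa using h1

open Polynomial in
lemma key_aux : ∀ (n : ℕ) (q : Polynomial ℂ), q.Monic → q.natDegree = n →
    (∀ z : ℂ, q.IsRoot z → ‖z‖ < 1) →
    ∀ (f : ℕ → ℂ) (L : ℂ), Tendsto f atTop (nhds L) →
    ∀ (r : ℕ → ℂ), (∀ k, ∑ i ∈ Finset.range (n + 1), q.coeff i * r (k + i) = f k) →
    Tendsto r atTop (nhds (L / q.eval 1)) := by
  intro n
  induction n with
  | zero =>
    intro q hq hdeg _ f L hf r hrec
    have hq1 : q = 1 := hq.natDegree_eq_zero.1 hdeg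
    subst hq1
    have h1 : ∀ k, r k = f k := fun k => by simpa using hrec k
    have h2 : Tendsto r atTop (nhds L) := hf.congr fun k => (h1 k).symm
    simpa using h2
  | succ n ih =>
    intro q hq hdeg hroots f L hf r hrec
    obtain ⟨lam, hlam⟩ := Complex.exists_root (f := q)
      (by rw [Polynomial.degree_eq_natDegree hq.ne_zero, hdeg]; exact_mod_cast Nat.succ_pos n)
    have hlam1 : ‖lam‖ < 1 := hroots lam hlam
    set p := q /ₘ (X - C lam) with hp
    have hfac : (X - C lam) * p = q := (mul_divByMonic_eq_iff_isRoot).2 hlam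
    have hpm : p.Monic := (monic_X_sub_C lam).of_mul_monic_left (by rwa [hfac])
    have hpd : p.natDegree = n := by
      have := natDegree_mul (monic_X_sub_C lam).ne_zero hpm.ne_zero
      rw [hfac, hdeg, natDegree_X_sub_C] at this
      omega
    have hproots : ∀ z : ℂ, p.IsRoot z → ‖z‖ < 1 := by
      intro z hz
      apply hroots
      rw [← hfac]
      simp [IsRoot, hz.eq_zero]
    set s : ℕ → ℂ := fun k => r (k + 1) - lam * r k with hs
    have hsrec : ∀ k, ∑ i ∈ Finset.range (n + 1), p.coeff i * s (k + i) = f k := by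
      intro k
      have e1 : ∀ j, q.coeff j = (X * p).coeff j - lam * p.coeff j := by
        intro j
        rw [← hfac]
        simp [sub_mul, coeff_C_mul]
      have main : ∑ j ∈ Finset.range (n + 2), q.coeff j * r (k + j)
          = ∑ i ∈ Finset.range (n + 1), p.coeff i * s (k + i) := by
        calc ∑ j ∈ Finset.range (n + 2), q.coeff j * r (k + j)
            = ∑ j ∈ Finset.range (n + 2),
                ((X * p).coeff j * r (k + j) - lam * (p.coeff j * r (k + j))) := by
              refine Finset.sum_congr rfl fun j _ => ?_
              rw [e1]; ring
          _ = (∑ j ∈ Finset.range (n + 2), (X * p).coeff j * r (k + j))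
              - lam * ∑ j ∈ Finset.range (n + 2), p.coeff j * r (k + j) := by
              rw [Finset.sum_sub_distrib, Finset.mul_sum]
          _ = (∑ i ∈ Finset.range (n + 1), p.coeff i * r (k + i + 1))
              - lam * ∑ i ∈ Finset.range (n + 1), p.coeff i * r (k + i) := by
              congr 1
              · trans (∑ i ∈ Finset.range (n + 1), (X * p).coeff (i + 1) * r (k + (i + 1)))
                    + (X * p).coeff 0 * r (k + 0)
                · exact Finset.sum_range_succ' _ (n + 1)
                · simp only [coeff_X_mul, mul_coeff_zero, coeff_X_zero, zero_mul, add_zero]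
                  rfl
              · congr 1
                rw [Finset.sum_range_succ]
                have hz : p.coeff (n + 1) = 0 := coeff_eq_zero_of_natDegree_lt (by omega)
                simp [hz]
          _ = ∑ i ∈ Finset.range (n + 1), p.coeff i * s (k + i) := by
              rw [Finset.mul_sum, ← Finset.sum_sub_distrib]
              refine Finset.sum_congr rfl fun i _ => ?_
              simp only [hs]
              ring
      rw [← main]
      exact hrec k
    have hslim := ih p hpm hpd hproots f L hf s hsrec
    have hrlim := first_order_aux lam hlam1 s (L / p.eval 1) hslim r
      (by intro k; simp only [hs]; ring)
    have heval : q.eval 1 = (1 - lam) * p.eval 1 := by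
      rw [← hfac]; simp
    rw [heval]
    have hdd : L / ((1 - lam) * p.eval 1) = L / p.eval 1 / (1 - lam) := by
      rw [div_div, mul_comm]
    rw [hdd]
    exact hrlim

open Polynomial in
/-- **Lemma (discrete-time).** If all complex roots of
`s^(m-1) + b_{m-1} s^(m-2) + ⋯ + b₂ s + b₁` are in the open unit disc, `f[k] → f*`, and
`r[k+m-1] + b_{m-1} r[k+m-2] + ⋯ + b₁ r[k] = f[k]` for all `k`, then
`r[k] → f*/(1 + b₁ + ⋯ + b_{m-1})`. -/
theorem high_order_difference_convergence
    (m : ℕ) (hm : 2 ≤ m) (b : ℕ → ℝ)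
    (hroots : ∀ z : ℂ,
      z ^ (m - 1) + ∑ i ∈ Finset.range (m - 1), (b (i + 1) : ℂ) * z ^ i = 0 →
        ‖z‖ < 1)
    (f : ℕ → ℝ) (fstar : ℝ) (hflim : Tendsto f atTop (nhds fstar))
    (r : ℕ → ℝ)
    (hrec : ∀ k : ℕ,
      r (k + m - 1) + ∑ i ∈ Finset.range (m - 1), b (i + 1) * r (k + i) = f k) :
    Tendsto r atTop (nhds (fstar / (1 + ∑ i ∈ Finset.range (m - 1), b (i + 1)))) := by
  set n := m - 1 with hn
  have hn1 : 1 ≤ n := by omega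
  set q : Polynomial ℂ := X ^ n + ∑ i ∈ Finset.range n, C ((b (i + 1) : ℂ)) * X ^ i with hq
  have hdegsum : (∑ i ∈ Finset.range n, C ((b (i + 1) : ℂ)) * X ^ i).degree < (n : WithBot ℕ) := by
    apply lt_of_le_of_lt (Polynomial.degree_sum_le _ _)
    rw [Finset.sup_lt_iff (show (⊥ : WithBot ℕ) < (n : WithBot ℕ) from WithBot.bot_lt_coe n)]
    intro i hi
    exact lt_of_le_of_lt (degree_C_mul_X_pow_le _ _)
      (by exact_mod_cast Finset.mem_range.1 hi)
  have hmon : q.Monic := monic_X_pow_add hdegsum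
  have hdq : q.natDegree = n := by
    have hdd : q.degree = n := by
      rw [hq, degree_add_eq_left_of_degree_lt (by rwa [degree_X_pow]), degree_X_pow]
    exact natDegree_eq_of_degree_eq_some hdd
  have hcoeffn : q.coeff n = 1 := by
    have := hmon.leadingCoeff
    rwa [Polynomial.leadingCoeff, hdq] at this
  have hcoeff : ∀ i < n, q.coeff i = (b (i + 1) : ℂ) := by
    intro i hi
    rw [hq]
    simp only [coeff_add, coeff_X_pow, finset_sum_coeff, coeff_C_mul]
    rw [if_neg (by omega)]
    rw [Finset.sum_eq_single i
      (fun j _ hj => by rw [if_neg (Ne.symm hj), mul_zero])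
      (fun h => absurd (Finset.mem_range.2 hi) h)]
    simp
  have heval : ∀ z : ℂ, q.eval z = z ^ n + ∑ i ∈ Finset.range n, (b (i + 1) : ℂ) * z ^ i := by
    intro z
    simp [hq, eval_finset_sum]
  have hroots' : ∀ z : ℂ, q.IsRoot z → ‖z‖ < 1 := by
    intro z hz
    rw [IsRoot, heval] at hz
    simpa using hroots z hz
  set r' : ℕ → ℂ := fun k => (r k : ℂ) with hr'
  set f' : ℕ → ℂ := fun k => (f k : ℂ) with hf'
  have hfl : Tendsto f' atTop (nhds (fstar : ℂ)) :=
    (Complex.continuous_ofReal.tendsto _).comp hflim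
  have hrrec : ∀ k, ∑ i ∈ Finset.range (n + 1), q.coeff i * r' (k + i) = f' k := by
    intro k
    rw [Finset.sum_range_succ, hcoeffn,
      Finset.sum_congr rfl (fun i hi => by rw [hcoeff i (Finset.mem_range.1 hi)])]
    have h0 := hrec k
    have hkm : k + m - 1 = k + n := by omega
    rw [hkm] at h0
    have h2 : ((r (k + n) + ∑ i ∈ Finset.range n, b (i + 1) * r (k + i) : ℝ) : ℂ) = (f k : ℂ) := by
      exact_mod_cast congrArg (fun x : ℝ => (x : ℂ)) h0
    push_cast at h2
    simp only [hr', hf', one_mul]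
    linear_combination h2
  have hfin := key_aux n q hmon hdq hroots' f' (fstar : ℂ) hfl r' hrrec
  have hq1 : q.eval 1 = ((1 + ∑ i ∈ Finset.range n, b (i + 1) : ℝ) : ℂ) := by
    rw [heval]
    push_cast
    simp
  have hre : Tendsto (fun k => (r' k).re) atTop (nhds (((fstar : ℂ) / q.eval 1).re)) :=
    (Complex.continuous_re.tendsto _).comp hfin
  have heq : ((fstar : ℂ) / q.eval 1).re = fstar / (1 + ∑ i ∈ Finset.range n, b (i + 1)) := by
    rw [hq1, ← Complex.ofReal_div, Complex.ofReal_re]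
  rw [← heq]
  exact hre.congr (fun k => by simp [hr'])
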